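/- With notation as in the Dixon construction, each coefficient polynomial ψ_{ijk}(x1,x2,x3) of det U (expanded in powers of y1,y2,y3) vanishes at every common zero (s1,s2,s3) ∈ ℝ³ of f1, f2, f3, f4. -/

import Mathlib

open MvPolynomial

/-- Separate the six variables into outer `y`-variables (indices 3,4,5) and
inner `x`-variables (indices 0,1,2). -/
noncomputable def sepVars :
    MvPolynomial (Fin 6) ℝ ≃ₐ[ℝ] MvPolynomial (Fin 3) (MvPolynomial (Fin 3) ℝ) :=
  (renameEquiv ℝ (finSumFinEquiv (m := 3) (n := 3)).symm).trans
    ((renameEquiv ℝ (Equiv.sumComm (Fin 3) (Fin 3))).trans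
      (sumAlgEquiv ℝ (Fin 3) (Fin 3)))

lemma sepVars_X0 : sepVars (X 0) = C (X 0) := by
  have : (finSumFinEquiv (m:=3) (n:=3)).symm 0 = Sum.inl 0 := by decide
  simp [sepVars, sumAlgEquiv_X_inl, sumAlgEquiv_X_inr, this,
    sumToIter_Xl, sumToIter_Xr]

lemma sepVars_X1 : sepVars (X 1) = C (X 1) := by
  have : (finSumFinEquiv (m:=3) (n:=3)).symm 1 = Sum.inl 1 := by decide
  simp [sepVars, sumAlgEquiv_X_inl, sumAlgEquiv_X_inr, this,
    sumToIter_Xl, sumToIter_Xr]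

lemma sepVars_X2 : sepVars (X 2) = C (X 2) := by
  have : (finSumFinEquiv (m:=3) (n:=3)).symm 2 = Sum.inl 2 := by decide
  simp [sepVars, sumAlgEquiv_X_inl, sumAlgEquiv_X_inr, this,
    sumToIter_Xl, sumToIter_Xr]

lemma sepVars_X3 : sepVars (X 3) = X 0 := by
  have : (finSumFinEquiv (m:=3) (n:=3)).symm 3 = Sum.inr 0 := by decide
  simp [sepVars, sumAlgEquiv_X_inl, sumAlgEquiv_X_inr, this,
    sumToIter_Xl, sumToIter_Xr]

lemma sepVars_X4 : sepVars (X 4) = X 1 := by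
  have : (finSumFinEquiv (m:=3) (n:=3)).symm 4 = Sum.inr 1 := by decide
  simp [sepVars, sumAlgEquiv_X_inl, sumAlgEquiv_X_inr, this,
    sumToIter_Xl, sumToIter_Xr]

lemma sepVars_X5 : sepVars (X 5) = X 2 := by
  have : (finSumFinEquiv (m:=3) (n:=3)).symm 5 = Sum.inr 2 := by decide
  simp [sepVars, sumAlgEquiv_X_inl, sumAlgEquiv_X_inr, this,
    sumToIter_Xl, sumToIter_Xr]

/-- Each coefficient polynomial `ψ d` of `det U` vanishes at every common
zero of `f1, f2, f3, f4`. -/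
theorem stmt_12
    (f : Fin 4 → MvPolynomial (Fin 3) ℝ)
    (hdeg : ∀ i, (f i).totalDegree ≤ 2)
    (h : Fin 4 → Fin 3 → MvPolynomial (Fin 6) ℝ)
    (hh0 : ∀ i, h i 0 * (X 0 - X 3) =
      aeval ![(X 0 : MvPolynomial (Fin 6) ℝ), X 1, X 2] (f i) -
        aeval ![(X 3 : MvPolynomial (Fin 6) ℝ), X 1, X 2] (f i))
    (hh1 : ∀ i, h i 1 * (X 1 - X 4) =
      aeval ![(X 3 : MvPolynomial (Fin 6) ℝ), X 1, X 2] (f i) -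
        aeval ![(X 3 : MvPolynomial (Fin 6) ℝ), X 4, X 2] (f i))
    (hh2 : ∀ i, h i 2 * (X 2 - X 5) =
      aeval ![(X 3 : MvPolynomial (Fin 6) ℝ), X 4, X 2] (f i) -
        aeval ![(X 3 : MvPolynomial (Fin 6) ℝ), X 4, X 5] (f i))
    (U : Matrix (Fin 4) (Fin 4) (MvPolynomial (Fin 6) ℝ))
    (hU : ∀ i, U i = ![h i 0, h i 1, h i 2,
      aeval ![(X 3 : MvPolynomial (Fin 6) ℝ), X 4, X 5] (f i)])
    (ψ : (Fin 3 →₀ ℕ) → MvPolynomial (Fin 3) ℝ)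
    (hψ : ∀ d, ψ d = coeff d (sepVars U.det))
    (s : Fin 3 → ℝ) (hs : ∀ i, eval s (f i) = 0) :
    ∀ d, eval s (ψ d) = 0 := by
  classical
  intro d
  set Φ : MvPolynomial (Fin 6) ℝ →ₐ[ℝ] MvPolynomial (Fin 3) ℝ :=
    (mapAlgHom (aeval s : MvPolynomial (Fin 3) ℝ →ₐ[ℝ] ℝ)).comp sepVars.toAlgHom with hΦdef
  have haev : ∀ q : MvPolynomial (Fin 3) ℝ, aeval s q = eval s q := by
    intro q
    rw [aeval_def, Algebra.algebraMap_self]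
    rfl
  have hX0 : Φ (X 0) = C (s 0) := by
    simp [hΦdef, mapAlgHom_apply, sepVars_X0]
  have hX1 : Φ (X 1) = C (s 1) := by
    simp [hΦdef, mapAlgHom_apply, sepVars_X1]
  have hX2 : Φ (X 2) = C (s 2) := by
    simp [hΦdef, mapAlgHom_apply, sepVars_X2]
  have hX3 : Φ (X 3) = X 0 := by
    simp [hΦdef, mapAlgHom_apply, sepVars_X3]
  have hX4 : Φ (X 4) = X 1 := by
    simp [hΦdef, mapAlgHom_apply, sepVars_X4]
  have hX5 : Φ (X 5) = X 2 := by
    simp [hΦdef, mapAlgHom_apply, sepVars_X5]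
  have hC : ∀ p : MvPolynomial (Fin 3) ℝ,
      aeval (fun j => (C (s j) : MvPolynomial (Fin 3) ℝ)) p = C (eval s p) := by
    intro p
    have := eval₂_comp_left (C : ℝ →+* MvPolynomial (Fin 3) ℝ) (RingHom.id ℝ) s p
    simp only [RingHom.comp_id] at this
    rw [aeval_def, show (algebraMap ℝ (MvPolynomial (Fin 3) ℝ)) = C from rfl]
    rw [show eval s p = eval₂ (RingHom.id ℝ) s p from rfl, this]
    rfl
  -- the matrix M and kernel vector v
  set M : Matrix (Fin 4) (Fin 4) (MvPolynomial (Fin 3) ℝ) := U.map ⇑Φ with hMdef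
  set v : Fin 4 → MvPolynomial (Fin 3) ℝ :=
    ![C (s 0) - X 0, C (s 1) - X 1, C (s 2) - X 2, 1] with hvdef
  have hrow : ∀ i, M.mulVec v i = 0 := by
    intro i
    have e0 := congrArg Φ (hh0 i)
    have e1 := congrArg Φ (hh1 i)
    have e2 := congrArg Φ (hh2 i)
    simp only [map_mul, map_sub, hX0, hX1, hX2, hX3, hX4, hX5] at e0 e1 e2
    have hA0 : Φ (aeval ![(X 0 : MvPolynomial (Fin 6) ℝ), X 1, X 2] (f i)) = 0 := by
      rw [comp_aeval_apply]
      have heq : (fun j => Φ (![(X 0 : MvPolynomial (Fin 6) ℝ), X 1, X 2] j))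
          = fun j => (C (s j) : MvPolynomial (Fin 3) ℝ) := by
        funext j; fin_cases j <;> simp [hX0, hX1, hX2]
      rw [heq, hC, hs i, map_zero]
    simp only [hMdef, Matrix.mulVec, dotProduct, Fin.sum_univ_four,
      Matrix.map_apply, hU i, hvdef]
    simp only [Matrix.cons_val_zero, Matrix.cons_val_one, Matrix.head_cons,
      Matrix.cons_val_two, Matrix.tail_cons, Matrix.cons_val_three, Matrix.cons_val_fin_one]
    rw [e0, e1, e2]
    rw [hA0] at *
    ring
  have hMv : M.mulVec v = 0 := funext hrow
  have hdv : M.det • v = 0 := by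
    calc M.det • v = M.adjugate.mulVec (M.mulVec v) := by
          rw [Matrix.mulVec_mulVec, Matrix.adjugate_mul, Matrix.smul_mulVec,
            Matrix.one_mulVec]
      _ = 0 := by rw [hMv, Matrix.mulVec_zero]
  have hdet0 : M.det = 0 := by
    have h3 := congrFun hdv 3
    simpa [hvdef] using h3
  have hdet : Φ U.det = M.det := by
    rw [hMdef]
    exact RingHom.map_det Φ.toRingHom U
  rw [hψ d]
  have hcoeff : eval s (coeff d (sepVars U.det)) = coeff d (Φ U.det) := by
    have : Φ U.det = map ((aeval s : MvPolynomial (Fin 3) ℝ →ₐ[ℝ] ℝ) : _ →+* ℝ)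
        (sepVars U.det) := rfl
    rw [this, coeff_map, ← haev]
    rfl
  rw [hcoeff, hdet, hdet0]
  simp
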